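/- Fix an integer m ≥ 1 and a real p. Define P : (ZMod 3) × (ZMod 3) → ℝ by P(0,0) = p and P(i,j) = (1−p)/8 for (i,j) ≠ (0,0), and let r : (ZMod 3) × (ZMod 3) → ℝ satisfy Σ_{i,j} r(i,j) = 1. Set R₀ = Σ_{j} r(0,j), A_m = ((3p+1)/4)^m, B_m = ((9p−1)/8)^m, C_m = (3(1−p)/8)^m. Then the sum, over all tuples ((x₀,z₀),(x₁,z₁),…,(x_m,z_m)) ∈ ((ZMod 3) × (ZMod 3))^{m+1} satisfying z₁ = z₂ = ⋯ = z_m and x₀ + x₁ + ⋯ + x_m = 0 in ZMod 3, of r(x₀,z₀)·∏_{k=1}^m P(x_k,z_k), equals (1/3)·[A_m + (3R₀ − 1)·B_m + 2·C_m]. -/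

import Mathlib

noncomputable def Tq (g : ZMod 3 → ℝ) (m : ℕ) (s : ZMod 3) : ℝ :=
  ∑ x ∈ Finset.univ.filter (fun x : Fin m → ZMod 3 => ∑ k, x k = s), ∏ k, g (x k)

lemma zmod3_sum (h : ZMod 3 → ℝ) : ∑ z : ZMod 3, h z = h 0 + h 1 + h 2 := by
  rw [show (Finset.univ : Finset (ZMod 3)) = {0,1,2} from by decide]
  rw [Finset.sum_insert (by decide), Finset.sum_insert (by decide), Finset.sum_singleton,
    add_assoc]

lemma Tq_rec (g : ZMod 3 → ℝ) (m : ℕ) (s : ZMod 3) :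
    Tq g (m+1) s = ∑ a : ZMod 3, g a * Tq g m (s - a) := by
  unfold Tq
  rw [Finset.sum_filter]
  rw [← (Fin.consEquiv (fun _ : Fin (m+1) => ZMod 3)).sum_comp]
  rw [Fintype.sum_prod_type]
  simp only [Fin.consEquiv_apply, Fin.sum_univ_succ, Fin.prod_univ_succ, Fin.cons_zero,
    Fin.cons_succ]
  refine Finset.sum_congr rfl fun a _ => ?_
  rw [Finset.mul_sum, Finset.sum_filter]
  refine Finset.sum_congr rfl fun y _ => ?_
  rw [if_congr (show (a + ∑ x : Fin m, y x = s) ↔ (∑ k : Fin m, y k = s - a) from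
    ⟨fun h => by linear_combination h, fun h => by linear_combination h⟩) rfl rfl]

lemma Tq_zero (g : ZMod 3 → ℝ) (s : ZMod 3) :
    Tq g 0 s = if s = 0 then 1 else 0 := by
  unfold Tq
  rcases eq_or_ne s 0 with h | h
  · simp [h, Finset.filter_eq', eq_comm (a := s)]
  · rw [if_neg h]
    rw [Finset.sum_eq_zero]
    intro x hx
    exfalso
    exact h ((Finset.mem_filter.mp hx).2.symm ▸ rfl)

lemma Tq_formula (g : ZMod 3 → ℝ) (h12 : g 1 = g 2) (m : ℕ) (s : ZMod 3) :
    Tq g m s = ((g 0 + g 1 + g 2) ^ m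
      + (if s = 0 then 2 else -1) * (g 0 - g 1) ^ m) / 3 := by
  induction m generalizing s with
  | zero =>
    rw [Tq_zero]
    rcases eq_or_ne s 0 with h | h <;> simp [h] <;> norm_num
  | succ n ih =>
    rw [Tq_rec, zmod3_sum (fun a => g a * Tq g n (s - a)), ih, ih, ih]
    have hs : s = 0 ∨ s = 1 ∨ s = 2 := by revert s; decide
    rcases hs with h | h | h <;> subst h
    · rw [if_pos (by decide : (0:ZMod 3) - 0 = 0),
        if_neg (by decide : ¬((0:ZMod 3) - 1 = 0)),
        if_neg (by decide : ¬((0:ZMod 3) - 2 = 0)), if_pos rfl]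
      rw [h12]; ring
    · rw [if_neg (by decide : ¬((1:ZMod 3) - 0 = 0)),
        if_pos (by decide : ((1:ZMod 3) - 1 = 0)),
        if_neg (by decide : ¬((1:ZMod 3) - 2 = 0)),
        if_neg (by decide : ¬((1:ZMod 3) = 0))]
      rw [h12]; ring
    · rw [if_neg (by decide : ¬((2:ZMod 3) - 0 = 0)),
        if_neg (by decide : ¬((2:ZMod 3) - 1 = 0)),
        if_pos (by decide : ((2:ZMod 3) - 2 = 0)),
        if_neg (by decide : ¬((2:ZMod 3) = 0))]
      rw [h12]; ring

lemma const_sum (m : ℕ) (hm : 1 ≤ m) (F : (Fin m → ZMod 3) → ℝ) :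
    ∑ b ∈ Finset.univ.filter (fun b : Fin m → ZMod 3 => ∀ i j, b i = b j), F b
    = ∑ z : ZMod 3, F (fun _ => z) := by
  have hset : Finset.univ.filter (fun b : Fin m → ZMod 3 => ∀ i j, b i = b j)
      = (Finset.univ : Finset (ZMod 3)).image (fun z => (fun _ => z : Fin m → ZMod 3)) := by
    ext b
    simp only [Finset.mem_filter, Finset.mem_image, Finset.mem_univ, true_and]
    constructor
    · intro h
      exact ⟨b ⟨0, hm⟩, by funext i; exact (h i ⟨0, hm⟩).symm⟩
    · rintro ⟨z, rfl⟩ i j; rfl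
  rw [hset, Finset.sum_image]
  intro z1 _ z2 _ h
  exact congrFun h ⟨0, hm⟩

lemma main_split (m : ℕ) (hm : 1 ≤ m)
    (P : ZMod 3 × ZMod 3 → ℝ)
    (r : ZMod 3 × ZMod 3 → ℝ) :
    ∑ e ∈ Finset.univ.filter
        (fun e : (ZMod 3 × ZMod 3) × (Fin m → ZMod 3 × ZMod 3) =>
          (∀ i j : Fin m, (e.2 i).2 = (e.2 j).2) ∧
          e.1.1 + ∑ k : Fin m, (e.2 k).1 = 0),
        r e.1 * ∏ k : Fin m, P (e.2 k)
      = ∑ e1 : ZMod 3 × ZMod 3, ∑ z : ZMod 3,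
          r e1 * Tq (fun a => P (a, z)) m (-e1.1) := by
  rw [Finset.sum_filter, Fintype.sum_prod_type]
  refine Finset.sum_congr rfl fun e1 _ => ?_
  rw [← (Equiv.arrowProdEquivProdArrow (Fin m) (fun _ => ZMod 3) (fun _ => ZMod 3)).symm.sum_comp]
  rw [Fintype.sum_prod_type]
  rw [Finset.sum_comm]
  dsimp only [Equiv.arrowProdEquivProdArrow, Equiv.coe_fn_symm_mk]
  show (∑ y : Fin m → ZMod 3, ∑ x : Fin m → ZMod 3, if (∀ i j : Fin m, y i = y j) ∧
    e1.1 + ∑ k, x k = 0 then r e1 * ∏ k, P (x k, y k) else 0) = _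
  simp only [ite_and]
  have step1 : ∀ b : Fin m → ZMod 3,
      (∑ a : Fin m → ZMod 3, if (∀ i j : Fin m, b i = b j) then
        (if e1.1 + ∑ k : Fin m, a k = 0 then r e1 * ∏ k : Fin m, P (a k, b k) else 0) else 0)
      = if (∀ i j : Fin m, b i = b j) then
        (∑ a : Fin m → ZMod 3,
          if e1.1 + ∑ k : Fin m, a k = 0 then r e1 * ∏ k : Fin m, P (a k, b k) else 0) else 0 := by
    intro b; split
    · rfl
    · exact Finset.sum_const_zero
  rw [Finset.sum_congr rfl fun b _ => step1 b, ← Finset.sum_filter]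
  have hconst := const_sum m hm (fun b : Fin m → ZMod 3 =>
    ∑ a : Fin m → ZMod 3,
      if e1.1 + ∑ k : Fin m, a k = 0 then r e1 * ∏ k : Fin m, P (a k, b k) else 0)
  rw [hconst]
  refine Finset.sum_congr rfl fun z _ => ?_
  unfold Tq
  rw [Finset.mul_sum, Finset.sum_filter]
  refine Finset.sum_congr rfl fun a _ => ?_
  rw [if_congr (show (e1.1 + ∑ k : Fin m, a k = 0) ↔ (∑ k : Fin m, a k = -e1.1) from
    ⟨fun h => by linear_combination h, fun h => by linear_combination h⟩) rfl rfl]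

/-- Appendix A: exact success probability of the `m`-carrier qutrit purification
round with star stabilizer generators.  The sum over error configurations
`((x₀,z₀),(x₁,z₁),…,(x_m,z_m))` satisfying the syndrome-success conditions
`z₁ = ⋯ = z_m` and `x₀ + x₁ + ⋯ + x_m = 0 (mod 3)` of
`r(x₀,z₀) · ∏_k P(x_k,z_k)` equals `(1/3)[A_m + (3R₀−1)B_m + 2C_m]`. -/
theorem mcaepp_success_probability (m : ℕ) (hm : 1 ≤ m) (p : ℝ)
    (P : ZMod 3 × ZMod 3 → ℝ)
    (hP0 : P (0, 0) = p) (hP : ∀ x : ZMod 3 × ZMod 3, x ≠ (0, 0) → P x = (1 - p) / 8)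
    (r : ZMod 3 × ZMod 3 → ℝ) (hr : ∑ x : ZMod 3 × ZMod 3, r x = 1) :
    ∑ e ∈ Finset.univ.filter
        (fun e : (ZMod 3 × ZMod 3) × (Fin m → ZMod 3 × ZMod 3) =>
          (∀ i j : Fin m, (e.2 i).2 = (e.2 j).2) ∧
          e.1.1 + ∑ k : Fin m, (e.2 k).1 = 0),
        r e.1 * ∏ k : Fin m, P (e.2 k)
      = (1 / 3) * (((3 * p + 1) / 4) ^ m
          + (3 * (∑ j : ZMod 3, r (0, j)) - 1) * ((9 * p - 1) / 8) ^ m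
          + 2 * ((3 * (1 - p)) / 8) ^ m) := by
  rw [main_split m hm P r]
  set q : ℝ := (1 - p) / 8 with hq
  -- evaluate Tq for each z
  have hT0 : ∀ s : ZMod 3, Tq (fun a => P (a, 0)) m s
      = ((3 * p + 1) / 4) ^ m / 3
        + (if s = 0 then 2 else -1) * ((9 * p - 1) / 8) ^ m / 3 := by
    intro s
    rw [Tq_formula _ (by
      show P (1, 0) = P (2, 0)
      rw [hP _ (by decide), hP _ (by decide)]) m s]
    have e0 : P (0, 0) = p := hP0
    have e1 : P (1, 0) = q := hP _ (by decide)
    have e2 : P (2, 0) = q := hP _ (by decide)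
    simp only [e0, e1, e2, hq]
    split <;> ring_nf
  have hTz : ∀ z : ZMod 3, z ≠ 0 → ∀ s : ZMod 3, Tq (fun a => P (a, z)) m s
      = ((3 * (1 - p)) / 8) ^ m / 3 := by
    intro z hz s
    rw [Tq_formula _ (by
      show P (1, z) = P (2, z)
      rw [hP _ (by simp), hP _ (by simp; exact fun h => absurd h (by decide))]) m s]
    have e0 : P (0, z) = q := hP _ (by simp [hz])
    have e1 : P (1, z) = q := hP _ (by simp)
    have e2 : P (2, z) = q := hP _ (by simp; exact fun h => absurd h (by decide))
    simp only [e0, e1, e2, hq]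
    rw [sub_self, zero_pow (by omega : m ≠ 0)]
    ring_nf
  have hz1 : (1 : ZMod 3) ≠ 0 := by decide
  have hz2 : (2 : ZMod 3) ≠ 0 := by decide
  have hneg : ∀ x : ZMod 3, (-x = 0) ↔ (x = 0) := fun x => neg_eq_zero
  -- pointwise rewrite of the inner z-sum
  have hinner : ∀ e1 : ZMod 3 × ZMod 3,
      (∑ z : ZMod 3, r e1 * Tq (fun a => P (a, z)) m (-e1.1))
      = r e1 * (((3 * p + 1) / 4) ^ m / 3 + 2 * ((3 * (1 - p)) / 8) ^ m / 3)
        + (r e1 * (if e1.1 = 0 then 2 else -1)) * (((9 * p - 1) / 8) ^ m / 3) := by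
    intro e1
    rw [zmod3_sum (fun z => r e1 * Tq (fun a => P (a, z)) m (-e1.1))]
    rw [hT0, hTz 1 hz1, hTz 2 hz2]
    rw [if_congr (hneg e1.1) rfl rfl]
    split <;> ring
  rw [Finset.sum_congr rfl fun e1 _ => hinner e1]
  rw [Finset.sum_add_distrib, ← Finset.sum_mul, ← Finset.sum_mul, hr]
  have hcount : ∑ e1 : ZMod 3 × ZMod 3, r e1 * (if e1.1 = 0 then (2:ℝ) else -1)
      = 3 * (∑ j : ZMod 3, r (0, j)) - 1 := by
    have : ∀ e1 : ZMod 3 × ZMod 3, r e1 * (if e1.1 = 0 then (2:ℝ) else -1)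
        = 3 * (if e1.1 = 0 then r e1 else 0) - r e1 := by
      intro e1; split <;> ring
    rw [Finset.sum_congr rfl fun e1 _ => this e1, Finset.sum_sub_distrib, hr,
      ← Finset.mul_sum]
    congr 2
    rw [Fintype.sum_prod_type]
    rw [Finset.sum_congr rfl (fun x _ => by
      rw [show (∑ z : ZMod 3, if x = 0 then r (x, z) else 0)
        = if x = 0 then (∑ z : ZMod 3, r (x, z)) else 0 from by
          by_cases hx : x = 0
          · rw [if_pos hx]
            exact Finset.sum_congr rfl fun z _ => if_pos hx
          · rw [if_neg hx]
            rw [Finset.sum_congr rfl fun z _ => if_neg hx]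
            exact Finset.sum_const_zero])]
    rw [Finset.sum_ite_eq' Finset.univ (0 : ZMod 3) (fun x => ∑ z : ZMod 3, r (x, z))]
    simp
  rw [hcount]
  ring
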